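/- Let A ⊂ ℝ^D be a closed set with positive reach τ_A > 0, and let {B_i}_{i∈ℕ} be a countable family of closed balls, where B_i has radius r_i < τ_A for each i. If the intersection ⋂_{i∈ℕ} B_i ∩ A is nonempty, then its reach satisfies τ_{⋂_i B_i ∩ A} ≥ inf_{i∈ℕ} r_i. -/

import Mathlib

open Metric Set ENNReal InnerProductSpace Filter

noncomputable section

abbrev Euc (D : ℕ) := EuclideanSpace ℝ (Fin D)

variable {D : ℕ}

/-- The medial axis of a set `A ⊆ ℝ^D`: points having at least two nearest points on `A`. -/
def medialAxis (A : Set (Euc D)) : Set (Euc D) :=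
  {z | ∃ p ∈ A, ∃ q ∈ A, p ≠ q ∧ dist p z = Metric.infDist z A ∧ dist q z = Metric.infDist z A}

/-- The reach of `A ⊆ ℝ^D` (with value `∞` when the medial axis is empty). -/
def reach (A : Set (Euc D)) : ℝ≥0∞ :=
  ⨅ z ∈ medialAxis A, ENNReal.ofReal (Metric.infDist z A)

lemma par_law (w p q : Euc D) :
    dist w p ^ 2 + dist w q ^ 2 = 2 * dist w (midpoint ℝ p q) ^ 2 + dist p q ^ 2 / 2 := by
  set m := midpoint ℝ p q with hmdef
  have hm : m = (2:ℝ)⁻¹ • (p + q) := by rw [hmdef, midpoint_eq_smul_add, invOf_eq_inv]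
  have h1 : w - p = (w - m) - (2:ℝ)⁻¹ • (p - q) := by rw [hm]; module
  have h2 : w - q = (w - m) + (2:ℝ)⁻¹ • (p - q) := by rw [hm]; module
  rw [dist_eq_norm w p, dist_eq_norm w q, dist_eq_norm w m, dist_eq_norm p q, h1, h2,
    norm_sub_sq_real, norm_add_sq_real, norm_smul]
  simp only [norm_inv, Real.norm_ofNat]
  ring


lemma first_order {A : Set (Euc D)} (hA : IsClosed A) (hAne : A.Nonempty)
    (y w : Euc D) (K : ℝ) (hK : 0 < K)
    (hmax : ∀ u ∈ closedBall y (3*K),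
      infDist u A - dist u y ^ 2 / (2*K) ≤ infDist w A - dist w y ^ 2 / (2*K))
    (hw : dist w y ≤ 2*K)
    (a : Euc D) (haA : a ∈ A) (ha : infDist w A = dist w a) (hpos : 0 < dist w a)
    (hU : ∀ b ∈ A, dist w b = infDist w A → b = a) :
    (dist w a) • (w - y) = K • (w - a) := by
  set e := dist w a with hedef
  have stepA : ∀ v : Euc D, ‖v‖ = 1 → ⟪w - a, v⟫_ℝ ≤ e / K * ⟪w - y, v⟫_ℝ := by
    intro v hv
    set α := ⟪w - y, v⟫_ℝ with hα
    have hαle : |α| ≤ 2*K := by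
      calc |α| ≤ ‖w - y‖ * ‖v‖ := abs_real_inner_le_norm _ _
      _ = dist w y := by rw [hv, mul_one, dist_eq_norm]
      _ ≤ 2*K := hw
    set ε : ℕ → ℝ := fun n => K / (n + 1) with hε
    have hεpos : ∀ n, 0 < ε n := fun n => by positivity
    have hεle : ∀ n, ε n ≤ K := by
      intro n
      rw [hε]
      rw [div_le_iff₀ (by positivity)]
      nlinarith [(Nat.cast_nonneg n : (0:ℝ) ≤ n), hK]
    have hεlim : Tendsto ε atTop (nhds 0) := by
      have h1 : Tendsto (fun n : ℕ => 1 / ((n:ℝ) + 1)) atTop (nhds 0) :=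
        tendsto_one_div_add_atTop_nhds_zero_nat
      have := h1.const_mul K
      simpa [hε, div_eq_mul_inv, mul_comm] using this
    have hch : ∀ n, ∃ b ∈ A, infDist (w + ε n • v) A = dist (w + ε n • v) b :=
      fun n => hA.exists_infDist_eq_dist hAne _
    choose b hbA hbd using hch
    have expand : ∀ (x z : Euc D) (t : ℝ),
        dist (x + t • v) z ^ 2 = dist x z ^ 2 + 2*t*⟪x - z, v⟫_ℝ + t^2 := by
      intro x z t
      rw [dist_eq_norm, dist_eq_norm]
      have h1 : x + t • v - z = (x - z) + t • v := by module
      rw [h1, norm_add_sq_real, real_inner_smul_right, norm_smul]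
      simp only [Real.norm_eq_abs]
      rw [hv]
      rw [mul_one, sq_abs]
      ring
    have hdist_step : ∀ n, dist (w + ε n • v) w = ε n := by
      intro n
      rw [dist_eq_norm, add_sub_cancel_left, norm_smul, hv, mul_one, Real.norm_eq_abs,
        abs_of_pos (hεpos n)]
    have hin : ∀ n, w + ε n • v ∈ closedBall y (3*K) := by
      intro n
      rw [mem_closedBall]
      calc dist (w + ε n • v) y ≤ dist (w + ε n • v) w + dist w y := dist_triangle _ _ _
      _ ≤ ε n + 2*K := by rw [hdist_step n]; linarith
      _ ≤ 3*K := by linarith [hεle n]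
    have hupper : ∀ n, infDist (w + ε n • v) A ≤ e + ε n * (2*α + ε n) / (2*K) := by
      intro n
      have h1 := hmax _ (hin n)
      have h2 := expand w y (ε n)
      rw [ha, h2] at h1
      have key : (dist w y ^2 + 2*ε n*α + ε n^2)/(2*K) - dist w y^2/(2*K)
          = ε n * (2*α + ε n)/(2*K) := by
        field_simp
        ring
      rw [← hα] at h1
      linarith
    have hlow : ∀ n, e ≤ dist w (b n) := by
      intro n
      rw [← ha]
      exact infDist_le_dist_of_mem (hbA n)
    -- the per-n inequality
    set G : ℝ → ℝ := fun t => e*(2*α + t)/(2*K) + t*(2*α+t)^2/(8*K^2) - t/2 with hG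
    have hkeyn : ∀ n, ⟪w - b n, v⟫_ℝ ≤ G (ε n) := by
      intro n
      set u := ε n * (2*α + ε n) / (2*K) with hu
      have h1 : dist (w + ε n • v) (b n) ≤ e + u := by rw [← hbd n]; exact hupper n
      have h2 : dist (w + ε n • v) (b n) ^ 2 ≤ (e + u)^2 := by
        nlinarith [dist_nonneg (x := w + ε n • v) (y := b n)]
      rw [expand w (b n) (ε n)] at h2
      have h3 : e^2 ≤ dist w (b n)^2 := by nlinarith [hlow n, dist_nonneg (x := w) (y := b n)]
      have h4 : 2 * ε n * ⟪w - b n, v⟫_ℝ ≤ 2*e*u + u^2 - ε n ^2 := by nlinarith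
      have h5 : 2*e*u + u^2 - ε n^2 = 2 * ε n * G (ε n) := by
        rw [hu, hG]
        field_simp
        ring
      rw [h5] at h4
      have h6 : 0 < 2 * ε n := by linarith [hεpos n]
      nlinarith [h4]
    -- compactness: extract convergent subsequence of (b n)
    have hbmem : ∀ n, b n ∈ closedBall w (e + 4*K) := by
      intro n
      rw [mem_closedBall, dist_comm]
      have h1 : dist w (b n) ≤ dist (w + ε n • v) (b n) + ε n := by
        calc dist w (b n) ≤ dist w (w + ε n • v) + dist (w + ε n • v) (b n) :=
          dist_triangle _ _ _
        _ = dist (w + ε n • v) (b n) + ε n := by rw [dist_comm, hdist_step n]; ring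
      have h2 : ε n * (2*α + ε n) / (2*K) ≤ 3*K := by
        rw [div_le_iff₀ (by positivity)]
        nlinarith [hεpos n, hεle n, abs_le.mp hαle]
      have := hupper n
      linarith [hεle n, hbd n]
    obtain ⟨L, hLmem, φ, hφmono, hφtend⟩ :=
      (isCompact_closedBall w (e + 4*K)).tendsto_subseq hbmem
    have hφtop : Tendsto φ atTop atTop := hφmono.tendsto_atTop
    have hLA : L ∈ A := hA.mem_of_tendsto hφtend (Eventually.of_forall fun n => hbA (φ n))
    have hdcont : Tendsto (fun n => dist w (b (φ n))) atTop (nhds (dist w L)) :=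
      (tendsto_const_nhds.dist hφtend)
    have hεφ : Tendsto (fun n => ε (φ n)) atTop (nhds 0) := hεlim.comp hφtop
    have hLe : dist w L = e := by
      have hge : e ≤ dist w L := ge_of_tendsto hdcont (Eventually.of_forall fun n => hlow (φ n))
      have hub : Tendsto (fun n => e + ε (φ n) * (2*α + ε (φ n)) / (2*K) + ε (φ n))
          atTop (nhds e) := by
        have hcont : Continuous (fun t : ℝ => e + t * (2*α + t) / (2*K) + t) := by fun_prop
        have := (hcont.tendsto 0).comp hεφ
        simpa [Function.comp_def] using this
      have hle : dist w L ≤ e := by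
        refine le_of_tendsto_of_tendsto' hdcont hub fun n => ?_
        calc dist w (b (φ n)) ≤ dist (w + ε (φ n) • v) (b (φ n)) + ε (φ n) := by
              calc dist w (b (φ n)) ≤ dist w (w + ε (φ n) • v) + dist (w + ε (φ n) • v) (b (φ n)) :=
                dist_triangle _ _ _
              _ = _ := by rw [dist_comm w, hdist_step (φ n)]; ring
        _ ≤ e + ε (φ n) * (2*α + ε (φ n)) / (2*K) + ε (φ n) := by linarith [hupper (φ n), hbd (φ n)]
      linarith
    have hLa : L = a := hU L hLA (by rw [hLe, ha])
    -- pass to the limit in the inner-product inequality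
    have hinner : Tendsto (fun n => ⟪w - b (φ n), v⟫_ℝ) atTop (nhds ⟪w - L, v⟫_ℝ) :=
      (tendsto_const_nhds.sub hφtend).inner tendsto_const_nhds
    have hGlim : Tendsto (fun n => G (ε (φ n))) atTop (nhds (G 0)) := by
      have hcont : Continuous G := by rw [hG]; fun_prop
      exact (hcont.tendsto 0).comp hεφ
    have hfin : ⟪w - L, v⟫_ℝ ≤ G 0 :=
      le_of_tendsto_of_tendsto' hinner hGlim fun n => hkeyn (φ n)
    rw [hLa] at hfin
    have : G 0 = e / K * α := by rw [hG]; field_simp; ring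
    rw [this] at hfin
    exact hfin
  -- Step B: conclude the vector identity
  set g := (e / K) • (w - y) - (w - a) with hg
  rcases eq_or_ne g 0 with hgz | hgz
  · have h2 : (e / K) • (w - y) = w - a := by
      have := sub_eq_zero.mp hgz
      exact this
    have h3 : K • ((e / K) • (w - y)) = K • (w - a) := by rw [h2]
    rw [smul_smul] at h3
    have h4 : K * (e / K) = e := by field_simp
    rwa [h4] at h3
  · exfalso
    have hgn : 0 < ‖g‖ := norm_pos_iff.mpr hgz
    have hv : ‖(-‖g‖⁻¹) • g‖ = 1 := by
      rw [norm_smul, Real.norm_eq_abs, abs_neg, abs_inv, abs_of_pos hgn]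
      field_simp
    have := stepA _ hv
    have hgv : ⟪g, (-‖g‖⁻¹) • g⟫_ℝ = -‖g‖ := by
      rw [real_inner_smul_right, real_inner_self_eq_norm_sq]
      field_simp
    have hexp : ⟪g, (-‖g‖⁻¹) • g⟫_ℝ
        = e / K * ⟪w - y, (-‖g‖⁻¹) • g⟫_ℝ - ⟪w - a, (-‖g‖⁻¹) • g⟫_ℝ := by
      rw [hg, inner_sub_left, real_inner_smul_left]
    nlinarith [hgv, hexp, this, hgn]
lemma final_arith {e s dp dq dpq : ℝ} (hpar : dp^2 + dq^2 = 2*(s-e)^2 + dpq^2/2)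
    (hp2 : s^2 ≤ dp^2) (hq2 : s^2 ≤ dq^2) : e*(2*s - e) ≤ (dpq/2)^2 := by
  nlinarith

lemma hypoconvex {A : Set (Euc D)} (hA : IsClosed A) (hAne : A.Nonempty)
    {s : ℝ} (hs : 0 < s)
    (hmed : ∀ w ∈ medialAxis A, s < infDist w A)
    {p q : Euc D} (hp : p ∈ A) (hq : q ∈ A)
    (he : infDist (midpoint ℝ p q) A < s) :
    infDist (midpoint ℝ p q) A * (2 * s - infDist (midpoint ℝ p q) A) ≤ (dist p q / 2) ^ 2 := by
  set m := midpoint ℝ p q with hmdef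
  set e := infDist m A with hedef
  have he0 : 0 ≤ e := infDist_nonneg
  rcases eq_or_lt_of_le he0 with he0' | he0'
  · rw [← he0']
    norm_num
    positivity
  · obtain ⟨b, hbA, hbd⟩ := hA.exists_infDist_eq_dist hAne m
    -- hbd : infDist m A = dist m b,  so dist m b = e
    have hmb : ‖m - b‖ = e := by rw [← dist_eq_norm, ← hbd]
    set x : ℝ → Euc D := fun t => b + (t / e) • (m - b) with hx
    have hxdist : ∀ t, 0 ≤ t → dist (x t) b = t := by
      intro t ht
      rw [hx]
      simp only
      rw [dist_eq_norm, add_sub_cancel_left, norm_smul, Real.norm_eq_abs,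
        abs_of_nonneg (by positivity), hmb]
      field_simp
    have hxm : x e = m := by
      rw [hx]
      simp [div_self (ne_of_gt he0')]
    set T := {t : ℝ | t ∈ Icc e s ∧ infDist (x t) A = t} with hT
    have hTne : e ∈ T := ⟨⟨le_refl e, le_of_lt he⟩, by rw [hxm]⟩
    have hTbdd : BddAbove T := ⟨s, fun t ht => ht.1.2⟩
    have hTclosed : IsClosed T := by
      have hxc : Continuous x := by
        rw [hx]; fun_prop
      have : T = Icc e s ∩ {t | infDist (x t) A = t} := rfl
      rw [this]
      exact isClosed_Icc.inter
        (isClosed_eq ((continuous_infDist_pt A).comp hxc) continuous_id)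
    set t0 := sSup T with ht0
    have ht0T : t0 ∈ T := hTclosed.csSup_mem ⟨e, hTne⟩ hTbdd
    have ht0pos : 0 < t0 := lt_of_lt_of_le he0' ht0T.1.1
    have hkey : t0 = s := by
      by_contra hts
      have hts' : t0 < s := lt_of_le_of_ne ht0T.1.2 hts
      set K := min ((s - t0)/2) t0 with hKdef
      have hK : 0 < K := lt_min (by linarith) ht0pos
      have hKt0 : K ≤ t0 := min_le_right _ _
      have hK2 : 2*K ≤ s - t0 := by
        have := min_le_left ((s - t0)/2) t0
        linarith
      set y := x t0 with hy
      have hyA : infDist y A = t0 := ht0T.2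
      have hyb : dist y b = t0 := hxdist t0 (le_of_lt ht0pos)
      obtain ⟨w, hwball, hwmax'⟩ := (isCompact_closedBall y (3*K)).exists_isMaxOn
        ⟨y, mem_closedBall_self (by positivity)⟩
        (Continuous.continuousOn (Continuous.sub (continuous_infDist_pt A)
          (((continuous_id.dist continuous_const).pow 2).div_const (2*K))))
      have hwmax : ∀ u ∈ closedBall y (3*K),
          infDist u A - dist u y ^ 2 / (2*K) ≤ infDist w A - dist w y ^ 2 / (2*K) :=
        fun u hu => hwmax' hu
      have hFy := hwmax y (mem_closedBall_self (by positivity))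
      rw [dist_self] at hFy
      have hwlow : t0 + dist w y ^2/(2*K) ≤ infDist w A := by
        have h0 : (0:ℝ)^2/(2*K) = 0 := by norm_num
        rw [hyA] at hFy
        rw [h0] at hFy
        linarith
      have hwlip : infDist w A ≤ t0 + dist w y := by
        calc infDist w A ≤ infDist y A + dist w y := infDist_le_infDist_add_dist
        _ = t0 + dist w y := by rw [hyA]
      have hρ2K : dist w y ≤ 2*K := by
        have hstep : dist w y ^2/(2*K) ≤ dist w y := by linarith
        rw [div_le_iff₀ (by linarith)] at hstep
        nlinarith [dist_nonneg (x := w) (y := y)]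
      obtain ⟨a, haA, had⟩ := hA.exists_infDist_eq_dist hAne w
      have hwpos : 0 < infDist w A := by
        have h9 : (0:ℝ) ≤ dist w y ^2/(2*K) := div_nonneg (sq_nonneg _) (by linarith)
        linarith
      by_cases hU : ∀ b' ∈ A, dist w b' = infDist w A → b' = a
      · -- unique nearest point : apply first_order
        have hfo := first_order hA hAne y w K hK hwmax hρ2K a haA had (had ▸ hwpos) hU
        set e' := dist w a with he'def
        have he'A : infDist w A = e' := had
        have he'pos : 0 < e' := he'A ▸ hwpos
        -- derive dist w y = K
        have hρK : dist w y = K := by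
          have hn : ‖e' • (w - y)‖ = ‖K • (w - a)‖ := by rw [hfo]
          rw [norm_smul, norm_smul, Real.norm_eq_abs, Real.norm_eq_abs,
            abs_of_pos he'pos, abs_of_pos hK, ← dist_eq_norm, ← dist_eq_norm] at hn
          have h5 : e' * dist w y = e' * K := by rw [hn, ← he'def]; ring
          exact mul_left_cancel₀ (ne_of_gt he'pos) h5
        have hwy : w - y = (K/e') • (w - a) := by
          have h5 : (e'⁻¹ * e') • (w - y) = (e'⁻¹ * K) • (w - a) := by
            rw [mul_smul, mul_smul, hfo]
          rw [inv_mul_cancel₀ (ne_of_gt he'pos), one_smul] at h5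
          rw [h5, div_eq_inv_mul]
        have he'low : t0 + K/2 ≤ e' := by
          have h5 : t0 + dist w y ^2/(2*K) ≤ e' := by rw [← he'A]; exact hwlow
          rw [hρK, show K^2/(2*K) = K/2 from by field_simp] at h5
          exact h5
        have he'K : K < e' := by linarith
        have hya : dist y a = e' - K := by
          have h1 : y - a = (1 - K/e') • (w - a) := by
            rw [sub_smul, one_smul, ← hwy]
            module
          have h6 : (0:ℝ) < 1 - K/e' := by
            rw [sub_pos, div_lt_one he'pos]
            exact he'K
          rw [dist_eq_norm, h1, norm_smul, Real.norm_eq_abs, abs_of_pos h6,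
            ← dist_eq_norm, ← he'def]
          field_simp
        have he'exact : e' = t0 + K := by
          have h1 : t0 ≤ dist y a := by rw [← hyA]; exact infDist_le_dist_of_mem haA
          rw [hya] at h1
          have h2 : e' ≤ t0 + K := by rw [← he'A, ← hρK]; exact hwlip
          linarith
        have hab : a = b := by
          by_contra hab
          have hymed : y ∈ medialAxis A := by
            refine ⟨a, haA, b, hbA, hab, ?_, ?_⟩
            · rw [dist_comm, hyA, hya, he'exact]; ring
            · rw [dist_comm, hyb, hyA]
          have := hmed y hymed
          rw [hyA] at this
          linarith
        rw [hab] at hwy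
        have hyb' : y - b = (t0/e) • (m - b) := by
          rw [hy]
          simp only [hx]
          module
        have h1 : (t0/e') • (w - b) = (t0/e) • (m - b) := by
          have h5 : w - b - (K/e') • (w - b) = y - b := by
            rw [← hwy]
            module
          have h6 : (1 - K/e') • (w - b) = (t0/e) • (m - b) := by
            rw [sub_smul, one_smul, h5, hyb']
          rw [show t0/e' = 1 - K/e' from by rw [he'exact]; field_simp; ring, h6]
        have h3 : w - b = ((t0+K)/e) • (m - b) := by
          have h4 : (e'/t0) • ((t0/e') • (w - b)) = (e'/t0) • ((t0/e) • (m - b)) := by rw [h1]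
          rw [smul_smul, smul_smul,
            show e'/t0 * (t0/e') = 1 from by field_simp, one_smul,
            show e'/t0 * (t0/e) = (t0+K)/e from by
              rw [he'exact]; field_simp; try ring] at h4
          exact h4
        have hwx : w = x (t0 + K) := by
          simp only [hx]
          rw [← h3]
          abel
        have hmemT : t0 + K ∈ T := by
          refine ⟨⟨?_, ?_⟩, ?_⟩
          · linarith [ht0T.1.1]
          · linarith
          · rw [← hwx, he'A, he'exact]
        have := le_csSup hTbdd hmemT
        linarith
      · push_neg at hU
        obtain ⟨b', hb'A, hb'd, hb'ne⟩ := hU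
        have hwmed : w ∈ medialAxis A := by
          refine ⟨a, haA, b', hb'A, fun hcon => hb'ne hcon.symm, ?_, ?_⟩
          · rw [dist_comm]; exact had.symm
          · rw [dist_comm]; exact hb'd
        have := hmed w hwmed
        linarith
    -- now t0 = s
    have hsT : infDist (x s) A = s := by rw [← hkey]; exact ht0T.2
    have hxsm : dist (x s) m = s - e := by
      have h1 : x s - m = (s/e - 1) • (m - b) := by
        simp only [hx]
        module
      rw [dist_eq_norm, h1, norm_smul, Real.norm_eq_abs, hmb,
        abs_of_nonneg (by
          have : (1:ℝ) ≤ s/e := (one_le_div he0').2 he.le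
          linarith : (0:ℝ) ≤ s/e - 1)]
      field_simp
    have h1 : s ≤ dist (x s) p := hsT.symm.trans_le (infDist_le_dist_of_mem hp)
    have h2 : s ≤ dist (x s) q := hsT.symm.trans_le (infDist_le_dist_of_mem hq)
    have hpar := par_law (x s) p q
    rw [hxsm] at hpar
    have hp2 : s^2 ≤ dist (x s) p ^ 2 := pow_le_pow_left₀ hs.le h1 2
    have hq2 : s^2 ≤ dist (x s) q ^ 2 := pow_le_pow_left₀ hs.le h2 2
    exact final_arith hpar hp2 hq2
lemma arith_ball {e dcm hh d ri si : ℝ} (hP : e * (2*si - e) ≤ hh^2)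
    (hcm2 : dcm^2 ≤ ri^2 - hh^2) (hri : ri < si) (he0 : 0 ≤ e) (heh : e ≤ hh)
    (hhd : hh ≤ d) (hdri : d < ri) (hdcm : 0 ≤ dcm) : dcm ≤ ri - e := by
  have h1 : e * (2*ri - e) ≤ hh^2 := by nlinarith
  nlinarith

lemma arith_z {e dzm hh d s0 : ℝ} (hP : e * (2*s0 - e) ≤ hh^2)
    (hzm2 : dzm^2 = d^2 - hh^2) (hd0 : 0 < d) (hds : d < s0) (he0 : 0 ≤ e)
    (heh : e ≤ hh) (hhd : hh ≤ d) (hh0 : 0 < hh) (hdzm : 0 ≤ dzm) : dzm < d - e := by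
  rcases eq_or_lt_of_le he0 with h0 | h0
  · nlinarith
  · have h1 : e * (2*d - e) < hh^2 := by nlinarith
    nlinarith

/-- Lemma `lem:geometry_reach_intersection_balls` (ii).
If `A` is closed with reach `τ_A > 0` and `{B_i}_{i ∈ ℕ}` is a countable family of closed
balls of radii `r_i < τ_A` such that `⋂_i B_i ∩ A ≠ ∅`, then
`τ_{⋂_i B_i ∩ A} ≥ inf_i r_i`. -/
theorem reach_inter_balls_countable (A : Set (Euc D)) (hA : IsClosed A) (h₀ : 0 < reach A)
    (c : ℕ → Euc D) (r : ℕ → ℝ)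
    (hr : ∀ i, ENNReal.ofReal (r i) < reach A)
    (hne : ((⋂ i, Metric.closedBall (c i) (r i)) ∩ A).Nonempty) :
    (⨅ i, ENNReal.ofReal (r i)) ≤ reach ((⋂ i, Metric.closedBall (c i) (r i)) ∩ A) := by
  classical
  set S := (⋂ i, Metric.closedBall (c i) (r i)) ∩ A with hSdef
  rw [reach]
  refine le_iInf₂ fun z hz => ?_
  obtain ⟨p, hpS, q, hqS, hpq, hpd, hqd⟩ := hz
  by_contra hcon
  push_neg at hcon
  set d := infDist z S with hd
  have hd0 : 0 ≤ d := infDist_nonneg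
  have hdi : ∀ i, d < r i := by
    intro i
    have h1 : ENNReal.ofReal d < ENNReal.ofReal (r i) := lt_of_lt_of_le hcon (iInf_le _ i)
    exact (ENNReal.ofReal_lt_ofReal_iff_of_nonneg hd0).mp h1
  have hAne : A.Nonempty := by
    obtain ⟨x0, hx0⟩ := hne
    exact ⟨x0, hx0.2⟩
  have hpA : p ∈ A := hpS.2
  have hqA : q ∈ A := hqS.2
  have hpb : ∀ i, dist p (c i) ≤ r i := fun i => by
    have := mem_iInter.mp hpS.1 i
    rwa [mem_closedBall] at this
  have hqb : ∀ i, dist q (c i) ≤ r i := fun i => by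
    have := mem_iInter.mp hqS.1 i
    rwa [mem_closedBall] at this
  have hpq0 : 0 < dist p q := dist_pos.mpr hpq
  have htri : dist p q ≤ 2 * d := by
    calc dist p q ≤ dist p z + dist z q := dist_triangle _ _ _
    _ = d + d := by rw [hpd, dist_comm z q, hqd]
    _ = 2 * d := by ring
  have hdpos : 0 < d := by linarith
  set m := midpoint ℝ p q with hm
  set e := infDist m A with he
  have he0 : 0 ≤ e := infDist_nonneg
  have heh : e ≤ dist p q / 2 := by
    have h1 : e ≤ dist m p := infDist_le_dist_of_mem hpA
    have h2 : dist m p = dist p q / 2 := by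
      rw [hm, dist_midpoint_left]
      norm_num
      ring
    linarith
  have hhd : dist p q / 2 ≤ d := by linarith
  -- choice of scales s i
  have hfar : ∀ (t : ℝ), 0 ≤ t → ENNReal.ofReal t < reach A →
      ∀ w ∈ medialAxis A, t < infDist w A := by
    intro t ht0 htr w hw
    have h1 : reach A ≤ ENNReal.ofReal (infDist w A) := by
      rw [reach]
      exact iInf₂_le w hw
    exact (ENNReal.ofReal_lt_ofReal_iff_of_nonneg ht0).mp (lt_of_lt_of_le htr h1)
  have hsi : ∀ i, ∃ t : ℝ, r i < t ∧ 0 < t ∧ (∀ w ∈ medialAxis A, t < infDist w A) := by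
    intro i
    obtain ⟨u, hu1, hu2⟩ := exists_between (hr i)
    have hut : u ≠ ⊤ := hu2.ne_top
    have hri0 : (0:ℝ) ≤ r i := le_of_lt (lt_of_le_of_lt hd0 (hdi i))
    have hru : r i < u.toReal := by
      have h2 : ENNReal.ofReal (r i) < ENNReal.ofReal u.toReal := by
        rwa [ENNReal.ofReal_toReal hut]
      exact (ENNReal.ofReal_lt_ofReal_iff_of_nonneg hri0).mp h2
    refine ⟨u.toReal, hru, lt_of_le_of_lt hri0 hru, ?_⟩
    exact hfar u.toReal ENNReal.toReal_nonneg (by rwa [ENNReal.ofReal_toReal hut])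
  choose si hsir hsipos hsifar using hsi
  have hP : ∀ i, e * (2 * si i - e) ≤ (dist p q / 2)^2 := by
    intro i
    refine hypoconvex hA hAne (hsipos i) (hsifar i) hpA hqA ?_
    calc infDist (midpoint ℝ p q) A ≤ dist p q / 2 := heh
    _ ≤ d := hhd
    _ < r i := hdi i
    _ < si i := hsir i
  obtain ⟨b, hbA, hbd⟩ := hA.exists_infDist_eq_dist hAne m
  have hbS : b ∈ S := by
    refine ⟨mem_iInter.mpr fun i => ?_, hbA⟩
    rw [mem_closedBall]
    have hcm2 : dist (c i) m ^ 2 ≤ (r i)^2 - (dist p q / 2)^2 := by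
      have hpar := par_law (c i) p q
      have hcp : dist (c i) p ^ 2 ≤ (r i)^2 := by
        rw [dist_comm]
        exact pow_le_pow_left₀ dist_nonneg (hpb i) 2
      have hcq : dist (c i) q ^ 2 ≤ (r i)^2 := by
        rw [dist_comm]
        exact pow_le_pow_left₀ dist_nonneg (hqb i) 2
      rw [← hm] at hpar
      nlinarith [hpar, hcp, hcq]
    have hre : dist (c i) m ≤ r i - e :=
      arith_ball (hP i) hcm2 (hsir i) he0 heh hhd (hdi i) dist_nonneg
    calc dist b (c i) ≤ dist b m + dist m (c i) := dist_triangle _ _ _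
    _ = e + dist (c i) m := by rw [dist_comm b m, ← hbd, dist_comm m (c i)]
    _ ≤ e + (r i - e) := by linarith
    _ = r i := by ring
  have hzm2 : dist z m ^ 2 = d^2 - (dist p q / 2)^2 := by
    have hpar := par_law z p q
    rw [← hm] at hpar
    have hzp : dist z p = d := by rw [dist_comm]; exact hpd
    have hzq : dist z q = d := by rw [dist_comm]; exact hqd
    rw [hzp, hzq] at hpar
    nlinarith [hpar]
  have hzmlt : dist z m < d - e :=
    arith_z (hP 0) hzm2 hdpos (lt_trans (hdi 0) (hsir 0)) he0 heh hhd (by linarith) dist_nonneg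
  have hzb : dist z b < d := by
    calc dist z b ≤ dist z m + dist m b := dist_triangle _ _ _
    _ = dist z m + e := by rw [← hbd]
    _ < d := by linarith
  have hfin : d ≤ dist z b := infDist_le_dist_of_mem hbS
  linarith
end
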